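/- Let G be a prime 3^{+1}-rank-connected graph with at least 8 vertices, and let {a,b,c} be a triplet of G. Then G∖a, G∖b, and G∖c are all prime. -/

import Mathlib

open Finset

variable {V : Type} [Fintype V] [DecidableEq V]

open scoped Classical

/-- The rank over GF(2) of the `X × Y` submatrix of the adjacency matrix of `G`. -/
noncomputable def cutRankOn (G : SimpleGraph V) (X Y : Finset V) : ℕ :=
  (Matrix.of (fun (i : ↥X) (j : ↥Y) => if G.Adj i.1 j.1 then (1 : ZMod 2) else 0)).rank

/-- The cut-rank of `X` in the graph `G` restricted to the vertex set `S`: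
the rank over GF(2) of the `X × (S \ X)` submatrix of the adjacency matrix. -/
noncomputable def cutRank (G : SimpleGraph V) (S X : Finset V) : ℕ :=
  cutRankOn G X (S \ X)

/-- `A` gives a split of the graph `G` restricted to the vertex set `S`. -/
def IsSplit (G : SimpleGraph V) (S A : Finset V) : Prop :=
  A ⊆ S ∧ cutRank G S A ≤ 1 ∧ 2 ≤ A.card ∧ 2 ≤ (S \ A).card

/-- The graph `G` restricted to the vertex set `S` is prime: connected and with no split. -/
def IsPrime (G : SimpleGraph V) (S : Finset V) : Prop :=
  (G.induce (↑S : Set V)).Connected ∧ ∀ A, ¬ IsSplit G S A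

/-- `G` restricted to `S` is `k⁺ˡ`-rank-connected. -/
def RankConn (G : SimpleGraph V) (S : Finset V) (k l : ℤ) : Prop :=
  ∀ X ⊆ S, (cutRank G S X : ℤ) < k →
    min (X.card : ℤ) (((S \ X).card : ℤ)) < k + l

/-- `G` restricted to `S` is `k`-rank-connected. -/
def RankConnAll (G : SimpleGraph V) (S : Finset V) (k : ℤ) : Prop :=
  ∀ m : ℤ, m ≤ k → RankConn G S m 0

def SideA (G : SimpleGraph V) (v w x : V) : Prop := G.Adj v x ∧ ¬ G.Adj w x ∧ x ≠ w
def SideB (G : SimpleGraph V) (v w x : V) : Prop := G.Adj w x ∧ ¬ G.Adj v x ∧ x ≠ v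
def SideC (G : SimpleGraph V) (v w x : V) : Prop := G.Adj v x ∧ G.Adj w x

/-- `x` and `y` lie in different ones among the three sets
`N(v)−N(w)−{w}`, `N(w)−N(v)−{v}`, `N(v)∩N(w)`. -/
def PivotToggle (G : SimpleGraph V) (v w x y : V) : Prop :=
  (SideA G v w x ∧ SideB G v w y) ∨ (SideB G v w x ∧ SideA G v w y) ∨
  (SideA G v w x ∧ SideC G v w y) ∨ (SideC G v w x ∧ SideA G v w y) ∨
  (SideB G v w x ∧ SideC G v w y) ∨ (SideC G v w x ∧ SideB G v w y)

set_option linter.unusedSectionVars false in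
lemma pivotToggle_symm {G : SimpleGraph V} {v w x y : V}
    (h : PivotToggle G v w x y) : PivotToggle G v w y x := by
  unfold PivotToggle at h ⊢; tauto

/-- The graph `G ∧ vw` obtained by pivoting the edge `vw`: toggle adjacency across the
three sets and swap the labels of `v` and `w`. -/
def pivot (G : SimpleGraph V) (v w : V) : SimpleGraph V where
  Adj a b := a ≠ b ∧
    Xor' (G.Adj (Equiv.swap v w a) (Equiv.swap v w b))
         (PivotToggle G v w (Equiv.swap v w a) (Equiv.swap v w b))
  symm := by
    constructor
    intro a b h
    obtain ⟨hne, hx⟩ := h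
    refine ⟨hne.symm, ?_⟩
    have hA : G.Adj (Equiv.swap v w b) (Equiv.swap v w a) ↔
        G.Adj (Equiv.swap v w a) (Equiv.swap v w b) := SimpleGraph.adj_comm _ _ _
    have hT : PivotToggle G v w (Equiv.swap v w b) (Equiv.swap v w a) ↔
        PivotToggle G v w (Equiv.swap v w a) (Equiv.swap v w b) :=
      ⟨pivotToggle_symm, pivotToggle_symm⟩
    rw [hA, hT]
    exact hx
  loopless := by constructor; intro a h; exact h.1 rfl

/-- One pivot step along an edge. -/
def PivotStep (G H : SimpleGraph V) : Prop := ∃ v w, G.Adj v w ∧ H = pivot G v w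

/-- Pivot-equivalence: a sequence of pivots. -/
def PivotEquiv : SimpleGraph V → SimpleGraph V → Prop := Relation.ReflTransGen PivotStep

/-- `A` is a fully closed set of `G` restricted to `S`. -/
def FullyClosed (G : SimpleGraph V) (S A : Finset V) : Prop :=
  A ⊆ S ∧ cutRank G S A = 2 ∧ 2 < A.card ∧
    ∀ u ∈ S, u ∉ A → cutRank G S A < cutRank G S (insert u A)

/-- `{a,b,c}` is a triplet of `G` (on vertex set `univ`). -/
def Triplet (G : SimpleGraph V) (a b c : V) : Prop :=
  cutRank G Finset.univ {a, b, c} = 2 ∧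
  ∀ x ∈ ({a, b, c} : Finset V),
    cutRank G (Finset.univ \ {x}) (({a, b, c} : Finset V) \ {x}) = 2

/-- `B` is a `k`-branched set of `G` restricted to `S`. -/
inductive KBranched (G : SimpleGraph V) (S : Finset V) (k : ℕ) : Finset V → Prop
  | single (v : V) (hv : v ∈ S) (h : cutRank G S {v} ≤ k) : KBranched G S k {v}
  | split (B B' : Finset V) (hB : B ⊆ S) (h : cutRank G S B ≤ k)
      (h1 : B' ⊆ B) (h2 : B'.Nonempty) (h3 : B' ≠ B)
      (hb1 : KBranched G S k B') (hb2 : KBranched G S k (B \ B')) : KBranched G S k B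

/-- The rank-width of `G` restricted to `S`: the least `k` such that `S` is `k`-branched
(equivalently, the minimum width of a rank-decomposition). -/
noncomputable def rankWidth (G : SimpleGraph V) (S : Finset V) : ℕ :=
  sInf {k | S = ∅ ∨ KBranched G S k S}

/-- `A` is a titanic set of `G` restricted to `S`. -/
def Titanic (G : SimpleGraph V) (S A : Finset V) : Prop :=
  ∀ A1 A2 A3 : Finset V, A1 ∪ A2 ∪ A3 = A →
    Disjoint A1 A2 → Disjoint A1 A3 → Disjoint A2 A3 →
    cutRank G S A ≤ cutRank G S A1 ∨ cutRank G S A ≤ cutRank G S A2 ∨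
      cutRank G S A ≤ cutRank G S A3

set_option linter.unusedSectionVars false
set_option linter.unusedVariables false

/-- row vector of `x` with columns restricted to `Y`, in ambient space `V → ZMod 2`. -/
noncomputable def rvec (G : SimpleGraph V) (Y : Finset V) (x : V) : V → ZMod 2 :=
  fun u => if u ∈ Y ∧ G.Adj x u then 1 else 0

noncomputable def srank (G : SimpleGraph V) (X Y : Finset V) : ℕ :=
  Module.finrank (ZMod 2) (Submodule.span (ZMod 2) (rvec G Y '' ↑X))

/-- restriction map -/
noncomputable def restr (Y : Finset V) : (V → ZMod 2) →ₗ[ZMod 2] (↥Y → ZMod 2) :=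
  LinearMap.funLeft (ZMod 2) (ZMod 2) (fun j : ↥Y => (j : V))

noncomputable def extY (Y : Finset V) : (↥Y → ZMod 2) →ₗ[ZMod 2] (V → ZMod 2) where
  toFun g u := if h : u ∈ Y then g ⟨u, h⟩ else 0
  map_add' f g := by funext u; by_cases h : u ∈ Y <;> simp [h]
  map_smul' c f := by funext u; by_cases h : u ∈ Y <;> simp [h]

lemma cutRankOn_eq_srank (G : SimpleGraph V) (X Y : Finset V) :
    cutRankOn G X Y = srank G X Y := by
  classical
  unfold cutRankOn srank
  rw [Matrix.rank_eq_finrank_span_row, Matrix.row]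
  have hr : Set.range (Matrix.of (fun (i : ↥X) (j : ↥Y) =>
      if G.Adj i.1 j.1 then (1 : ZMod 2) else 0)) = restr Y '' (rvec G Y '' ↑X) := by
    ext f
    constructor
    · rintro ⟨i, rfl⟩
      refine ⟨rvec G Y i.1, ⟨i.1, i.2, rfl⟩, ?_⟩
      funext j
      simp [restr, LinearMap.funLeft, rvec, j.2]
    · rintro ⟨g, ⟨x, hx, rfl⟩, rfl⟩
      refine ⟨⟨x, hx⟩, ?_⟩
      funext j
      simp [restr, LinearMap.funLeft, rvec, j.2]
  rw [hr, ← Submodule.map_span]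
  apply le_antisymm
  · exact Submodule.finrank_map_le _ _
  · have : Submodule.span (ZMod 2) (rvec G Y '' ↑X) ≤
        Submodule.map (extY Y) (Submodule.map (restr Y) (Submodule.span (ZMod 2) (rvec G Y '' ↑X))) := by
      rw [Submodule.map_span, Submodule.map_span]
      apply Submodule.span_le.2
      rintro f ⟨x, hx, rfl⟩
      apply Submodule.subset_span
      refine ⟨restr Y (rvec G Y x), ⟨rvec G Y x, ⟨x, hx, rfl⟩, rfl⟩, ?_⟩
      funext u
      by_cases h : u ∈ Y <;> simp [extY, restr, LinearMap.funLeft, rvec, h]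
    calc Module.finrank (ZMod 2) (Submodule.span (ZMod 2) (rvec G Y '' ↑X))
        ≤ Module.finrank (ZMod 2) (Submodule.map (extY Y) (Submodule.map (restr Y) (Submodule.span (ZMod 2) (rvec G Y '' ↑X)))) := Submodule.finrank_mono this
      _ ≤ _ := Submodule.finrank_map_le _ _

-- truncation
lemma finrank_span_image_le (f : (V → ZMod 2) →ₗ[ZMod 2] (V → ZMod 2)) (s : Set (V → ZMod 2)) :
    Module.finrank (ZMod 2) (Submodule.span (ZMod 2) (f '' s)) ≤
      Module.finrank (ZMod 2) (Submodule.span (ZMod 2) s) := by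
  rw [← Submodule.map_span]; exact Submodule.finrank_map_le _ _

noncomputable def truncM (Y : Finset V) : (V → ZMod 2) →ₗ[ZMod 2] (V → ZMod 2) :=
  (extY Y).comp (restr Y)

lemma truncM_apply (Y : Finset V) (f : V → ZMod 2) (u : V) :
    truncM Y f u = if u ∈ Y then f u else 0 := by
  by_cases h : u ∈ Y <;> simp [truncM, extY, restr, LinearMap.funLeft, h]

lemma truncM_rvec {Y' Y : Finset V} (h : Y' ⊆ Y) (G : SimpleGraph V) (x : V) :
    truncM Y' (rvec G Y x) = rvec G Y' x := by
  funext u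
  rw [truncM_apply]
  by_cases hu : u ∈ Y'
  · simp [rvec, hu, h hu]
  · simp [rvec, hu]

lemma srank_mono_col (G : SimpleGraph V) (X : Finset V) {Y' Y : Finset V} (h : Y' ⊆ Y) :
    srank G X Y' ≤ srank G X Y := by
  unfold srank
  have him : rvec G Y' '' ↑X = truncM Y' '' (rvec G Y '' ↑X) := by
    rw [Set.image_image]
    exact Set.image_congr (fun x _ => (truncM_rvec h G x).symm)
  rw [him]
  exact finrank_span_image_le _ _

lemma finrank_span_singleton_le (v : V → ZMod 2) :
    Module.finrank (ZMod 2) (Submodule.span (ZMod 2) ({v} : Set (V → ZMod 2))) ≤ 1 := by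
  classical
  have := finrank_span_le_card (R := ZMod 2) ({v} : Set (V → ZMod 2))
  simpa using this

lemma finrank_span_sup_le (p q : Submodule (ZMod 2) (V → ZMod 2)) :
    Module.finrank (ZMod 2) ↥(p ⊔ q) ≤ Module.finrank (ZMod 2) p + Module.finrank (ZMod 2) q :=
  Submodule.finrank_add_le_finrank_add_finrank p q

-- inserting a row
lemma srank_insert_row_le (G : SimpleGraph V) (X Y : Finset V) (w : V) :
    srank G (insert w X) Y ≤ srank G X Y + 1 := by
  unfold srank
  rw [Finset.coe_insert, Set.image_insert_eq, Submodule.span_insert]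
  refine le_trans (finrank_span_sup_le _ _) ?_
  rw [add_comm]
  exact Nat.add_le_add_left (finrank_span_singleton_le _) _

-- inserting a column
lemma rvec_insert_col (G : SimpleGraph V) (Y : Finset V) {a : V} (ha : a ∉ Y) (x : V) :
    rvec G (insert a Y) x =
      rvec G Y x + (if G.Adj x a then (1 : ZMod 2) else 0) • (Pi.single a 1 : V → ZMod 2) := by
  funext u
  have hs : ((if G.Adj x a then (1:ZMod 2) else 0) • (Pi.single a 1 : V → ZMod 2)) u
      = if u = a ∧ G.Adj x a then 1 else 0 := by
    by_cases h : G.Adj x a <;> by_cases hu : u = a <;> simp [h, hu, Pi.single_apply]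
  simp only [Pi.add_apply, hs, rvec]
  by_cases hu : u = a
  · subst hu; simp [ha, Finset.mem_insert]
  · simp [hu, Finset.mem_insert]

lemma srank_insert_col_le (G : SimpleGraph V) (X Y : Finset V) {a : V} (ha : a ∉ Y) :
    srank G X (insert a Y) ≤ srank G X Y + 1 := by
  unfold srank
  have hle : Submodule.span (ZMod 2) (rvec G (insert a Y) '' ↑X) ≤
      Submodule.span (ZMod 2) (rvec G Y '' ↑X) ⊔
        Submodule.span (ZMod 2) ({(Pi.single a 1 : V → ZMod 2)} : Set (V → ZMod 2)) := by
    apply Submodule.span_le.2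
    rintro f ⟨x, hx, rfl⟩
    rw [rvec_insert_col G Y ha x]
    exact Submodule.add_mem _
      (Submodule.mem_sup_left (Submodule.subset_span ⟨x, hx, rfl⟩))
      (Submodule.mem_sup_right (Submodule.smul_mem _ _ (Submodule.subset_span rfl)))
  refine le_trans (Submodule.finrank_mono hle) ?_
  refine le_trans (finrank_span_sup_le _ _) ?_
  exact Nat.add_le_add_left (finrank_span_singleton_le _) _

lemma zmod2_cases : ∀ z : ZMod 2, z = 0 ∨ z = 1 := by decide

omit [Fintype V] [DecidableEq V] in
lemma eq_of_add_eq_zero2 {f g : V → ZMod 2} (h : f + g = 0) : f = g := by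
  funext u
  have h2 : f u + g u = 0 := congrFun h u
  rcases zmod2_cases (f u) with h3 | h3 <;> rcases zmod2_cases (g u) with h4 | h4 <;>
    rw [h3, h4] at h2 ⊢ <;> first | rfl | (exfalso; exact absurd h2 (by decide))

lemma dep_of_finrank_lt {n : ℕ} (v : Fin n → (V → ZMod 2))
    (h : Module.finrank (ZMod 2) (Submodule.span (ZMod 2) (Set.range v)) < n) :
    ∃ c : Fin n → ZMod 2, (∃ i, c i ≠ 0) ∧ ∑ i, c i • v i = 0 := by
  by_contra hc
  push_neg at hc
  have li : LinearIndependent (ZMod 2) v := by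
    rw [Fintype.linearIndependent_iff]
    intro g hg i
    by_contra hi
    exact hc g ⟨i, hi⟩ hg
  have := finrank_span_eq_card li
  rw [this] at h
  simp at h

omit [Fintype V] [DecidableEq V] in
lemma range_fin2 (f g : V → ZMod 2) : Set.range ![f, g] = {f, g} := by
  ext z
  constructor
  · rintro ⟨i, rfl⟩; fin_cases i <;> simp
  · rintro (rfl | rfl)
    · exact ⟨0, rfl⟩
    · exact ⟨1, rfl⟩

omit [Fintype V] [DecidableEq V] in
lemma range_fin3 (f g h : V → ZMod 2) : Set.range ![f, g, h] = {f, g, h} := by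
  ext z
  constructor
  · rintro ⟨i, rfl⟩; fin_cases i <;> simp
  · rintro (rfl | rfl | rfl)
    · exact ⟨0, rfl⟩
    · exact ⟨1, rfl⟩
    · exact ⟨2, rfl⟩

lemma pair_dep {f g : V → ZMod 2}
    (h : Module.finrank (ZMod 2) (Submodule.span (ZMod 2) ({f, g} : Set (V → ZMod 2))) ≤ 1) :
    ∃ cf cg : ZMod 2, ¬(cf = 0 ∧ cg = 0) ∧ cf • f + cg • g = 0 := by
  obtain ⟨c, ⟨i, hi⟩, hsum⟩ := dep_of_finrank_lt ![f, g] (by rw [range_fin2]; omega)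
  refine ⟨c 0, c 1, ?_, ?_⟩
  · rintro ⟨h0, h1⟩
    fin_cases i <;> simp_all
  · simpa [Fin.sum_univ_two] using hsum

lemma triple_dep {f g h : V → ZMod 2}
    (hr : Module.finrank (ZMod 2) (Submodule.span (ZMod 2) ({f, g, h} : Set (V → ZMod 2))) ≤ 2) :
    ∃ c0 c1 c2 : ZMod 2, ¬(c0 = 0 ∧ c1 = 0 ∧ c2 = 0) ∧ c0 • f + c1 • g + c2 • h = 0 := by
  obtain ⟨c, ⟨i, hi⟩, hsum⟩ := dep_of_finrank_lt ![f, g, h] (by rw [range_fin3]; omega)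
  refine ⟨c 0, c 1, c 2, ?_, ?_⟩
  · rintro ⟨h0, h1, h2⟩
    fin_cases i <;> simp_all
  · simpa [Fin.sum_univ_three, add_assoc] using hsum

lemma finrank_span_pair_le_of_mem {f g : V → ZMod 2}
    (h : f ∈ Submodule.span (ZMod 2) ({g} : Set (V → ZMod 2))) :
    Module.finrank (ZMod 2) (Submodule.span (ZMod 2) ({f, g} : Set (V → ZMod 2))) ≤ 1 := by
  have hsub : ({f, g} : Set (V → ZMod 2)) ⊆ Submodule.span (ZMod 2) ({g} : Set (V → ZMod 2)) := by
    rintro z (rfl | rfl)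
    · exact h
    · exact Submodule.subset_span rfl
  exact le_trans (Submodule.finrank_mono (Submodule.span_le.2 hsub)) (finrank_span_singleton_le g)

/-- from rank 2 of a pair: no nontrivial dependency. -/
lemma pair_indep {f g : V → ZMod 2}
    (h : 2 ≤ Module.finrank (ZMod 2) (Submodule.span (ZMod 2) ({f, g} : Set (V → ZMod 2))))
    (cf cg : ZMod 2) (hdep : cf • f + cg • g = 0) : cf = 0 ∧ cg = 0 := by
  by_contra hc
  have hle : Module.finrank (ZMod 2)
      (Submodule.span (ZMod 2) ({f, g} : Set (V → ZMod 2))) ≤ 1 := by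
    rcases zmod2_cases cf with h1 | h1
    · rcases zmod2_cases cg with h2 | h2
      · exact absurd ⟨h1, h2⟩ hc
      · -- g = 0
        rw [h1, h2, zero_smul, one_smul, zero_add] at hdep
        subst hdep
        rw [Set.pair_comm]
        exact finrank_span_pair_le_of_mem (Submodule.zero_mem _)
    · -- f = cg • g
      rw [h1, one_smul] at hdep
      have : f = cg • g := by
        apply eq_of_add_eq_zero2
        funext u
        have := congrFun hdep u
        simpa using this
      apply finrank_span_pair_le_of_mem
      rw [this]
      exact Submodule.smul_mem _ _ (Submodule.subset_span rfl)
  omega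

lemma srank_pair (G : SimpleGraph V) (Y : Finset V) (x y : V) :
    srank G {x, y} Y = Module.finrank (ZMod 2)
      (Submodule.span (ZMod 2) ({rvec G Y x, rvec G Y y} : Set (V → ZMod 2))) := by
  unfold srank
  rw [show rvec G Y '' ↑({x, y} : Finset V) = {rvec G Y x, rvec G Y y} by
    simp [Set.image_insert_eq]]

lemma srank_triple (G : SimpleGraph V) (Y : Finset V) (x y z : V) :
    srank G {x, y, z} Y = Module.finrank (ZMod 2)
      (Submodule.span (ZMod 2)
        ({rvec G Y x, rvec G Y y, rvec G Y z} : Set (V → ZMod 2))) := by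
  unfold srank
  rw [show rvec G Y '' ↑({x, y, z} : Finset V) = {rvec G Y x, rvec G Y y, rvec G Y z} by
    simp [Set.image_insert_eq]]

lemma cutRankOn_comm (G : SimpleGraph V) (X Y : Finset V) :
    cutRankOn G X Y = cutRankOn G Y X := by
  unfold cutRankOn
  have h : (Matrix.of fun (i : ↥X) (j : ↥Y) => if G.Adj i.1 j.1 then (1 : ZMod 2) else 0).transpose
      = Matrix.of fun (i : ↥Y) (j : ↥X) => if G.Adj i.1 j.1 then (1 : ZMod 2) else 0 := by
    ext i j
    simp only [Matrix.transpose_apply, Matrix.of_apply]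
    rw [SimpleGraph.adj_comm]
  rw [← h, Matrix.rank_transpose]

/-- the three-term relation from a triplet. -/
lemma triple_relation {G : SimpleGraph V} {a b c : V} {Y0 : Finset V}
    (h3 : srank G {a, b, c} Y0 ≤ 2)
    (hbc : 2 ≤ srank G {b, c} Y0) (hac : 2 ≤ srank G {a, c} Y0)
    (hab : 2 ≤ srank G {a, b} Y0) :
    rvec G Y0 a + rvec G Y0 b + rvec G Y0 c = 0 := by
  rw [srank_triple] at h3
  rw [srank_pair] at hbc hac hab
  obtain ⟨c0, c1, c2, hne, hsum⟩ := triple_dep h3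
  rcases zmod2_cases c0 with h0 | h0
  · rw [h0, zero_smul, zero_add] at hsum
    obtain ⟨e1, e2⟩ := pair_indep hbc c1 c2 hsum
    exact absurd ⟨h0, e1, e2⟩ hne
  rcases zmod2_cases c1 with h1 | h1
  · rw [h1, zero_smul, add_zero] at hsum
    have := pair_indep hac c0 c2 hsum
    rw [h0] at this
    exact absurd this.1 (by decide)
  rcases zmod2_cases c2 with h2 | h2
  · rw [h2, zero_smul, add_zero] at hsum
    have := pair_indep hab c0 c1 hsum
    rw [h0] at this
    exact absurd this.1 (by decide)
  rw [h0, h1, h2, one_smul, one_smul, one_smul] at hsum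
  exact hsum

/-- if every vertex of `B` has all its neighbours in `B ∪ {a}`, the cut-rank of `B` is small. -/
lemma srank_le_one_of_single_col (G : SimpleGraph V) {B : Finset V} {a : V} (ha : a ∉ B)
    (hiso : ∀ x ∈ B, ∀ u, u ∉ B → u ≠ a → ¬G.Adj x u) :
    srank G B (univ \ B) ≤ 1 := by
  have hsub : rvec G (univ \ B) '' ↑B ⊆
      ↑(Submodule.span (ZMod 2) ({(Pi.single a 1 : V → ZMod 2)} : Set (V → ZMod 2))) := by
    rintro f ⟨x, hx, rfl⟩
    rw [SetLike.mem_coe, Submodule.mem_span_singleton]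
    refine ⟨(if G.Adj x a then 1 else 0), ?_⟩
    funext u
    have hs : ((if G.Adj x a then (1:ZMod 2) else 0) • (Pi.single a 1 : V → ZMod 2)) u
        = if u = a ∧ G.Adj x a then 1 else 0 := by
      by_cases h : G.Adj x a <;> by_cases hu : u = a <;> simp [h, hu, Pi.single_apply]
    rw [hs]
    by_cases hu : u = a
    · subst hu
      simp [rvec, ha]
    · by_cases huB : u ∈ B
      · simp [rvec, huB, hu]
      · simp [rvec, huB, hu, hiso x hx u huB hu]
  exact le_trans (Submodule.finrank_mono (Submodule.span_le.2 hsub)) (finrank_span_singleton_le _)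

/-- the 4-set bound in the case `|B ∩ {b,c}| = 1`. -/
lemma quad_rank_le {G : SimpleGraph V} {a s t z : V} {Y0 : Finset V}
    (hY0 : Y0 = univ \ {a, s, t})
    (factR : rvec G Y0 a + rvec G Y0 s + rvec G Y0 t = 0)
    (hpair : srank G {t, z} ((univ \ {a}) \ {t, z}) ≤ 1)
    (hza : z ≠ a) (hzs : z ≠ s) (hzt : z ≠ t) :
    srank G {a, s, t, z} (univ \ {a, s, t, z}) ≤ 2 := by
  classical
  set D : Finset V := univ \ {a, s, t, z} with hD
  have hD1 : D ⊆ Y0 := by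
    rw [hY0]
    intro u hu
    simp only [hD, Finset.mem_sdiff, Finset.mem_univ, true_and, Finset.mem_insert,
      Finset.mem_singleton] at hu ⊢
    tauto
  have hD2 : D ⊆ (univ \ {a}) \ {t, z} := by
    intro u hu
    simp only [hD, Finset.mem_sdiff, Finset.mem_univ, true_and, Finset.mem_insert,
      Finset.mem_singleton] at hu ⊢
    tauto
  set g : V → (V → ZMod 2) := rvec G D with hg
  -- relation among g a, g s, g t
  have hrel : g a + g s + g t = 0 := by
    have := congrArg (truncM D) factR
    rw [map_add, map_add, map_zero, truncM_rvec hD1, truncM_rvec hD1, truncM_rvec hD1] at this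
    exact this
  have hga : g a = g s + g t := by
    apply eq_of_add_eq_zero2
    rw [← add_assoc]
    exact hrel
  -- the pair g t, g z has small span
  have hpr : Module.finrank (ZMod 2)
      (Submodule.span (ZMod 2) ({g t, g z} : Set (V → ZMod 2))) ≤ 1 := by
    have him : ({g t, g z} : Set (V → ZMod 2)) =
        truncM D '' ({rvec G ((univ \ {a}) \ {t, z}) t, rvec G ((univ \ {a}) \ {t, z}) z} :
          Set (V → ZMod 2)) := by
      rw [Set.image_insert_eq, Set.image_singleton, truncM_rvec hD2, truncM_rvec hD2]
    rw [him]
    refine le_trans (finrank_span_image_le _ _) ?_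
    rw [← srank_pair]
    exact hpair
  -- now bound the span of the four rows
  unfold srank
  have hsub : rvec G D '' ↑({a, s, t, z} : Finset V) ⊆
      ↑(Submodule.span (ZMod 2) ({g s} : Set (V → ZMod 2)) ⊔
        Submodule.span (ZMod 2) ({g t, g z} : Set (V → ZMod 2))) := by
    have hms : g s ∈ Submodule.span (ZMod 2) ({g s} : Set (V → ZMod 2)) :=
      Submodule.subset_span rfl
    have hmt : g t ∈ Submodule.span (ZMod 2) ({g t, g z} : Set (V → ZMod 2)) :=
      Submodule.subset_span (by left; rfl)
    have hmz : g z ∈ Submodule.span (ZMod 2) ({g t, g z} : Set (V → ZMod 2)) :=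
      Submodule.subset_span (by right; rfl)
    rintro f ⟨x, hx, rfl⟩
    simp only [Finset.coe_insert, Set.mem_insert_iff, Finset.coe_singleton,
      Set.mem_singleton_iff] at hx
    rcases hx with rfl | rfl | rfl | rfl
    · rw [SetLike.mem_coe, show rvec G D x = g x from rfl, hga]
      exact Submodule.add_mem _ (Submodule.mem_sup_left hms) (Submodule.mem_sup_right hmt)
    · exact Submodule.mem_sup_left hms
    · exact Submodule.mem_sup_right hmt
    · exact Submodule.mem_sup_right hmz
  refine le_trans (Submodule.finrank_mono (Submodule.span_le.2 hsub)) ?_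
  refine le_trans (finrank_span_sup_le _ _) ?_
  have := finrank_span_singleton_le (V := V) (g s)
  omega

set_option maxHeartbeats 1000000 in
/-- the contradiction in the case `B ∩ {a,b,c} = ∅`. -/
lemma disjoint_case_false {G : SimpleGraph V} {a b c x y : V}
    (hxa : x ≠ a) (hxb : x ≠ b) (hxc : x ≠ c)
    (hya : y ≠ a) (hyb : y ≠ b) (hyc : y ≠ c) (hxy : x ≠ y)
    (hab : a ≠ b) (hac : a ≠ c) (hbc : b ≠ c)
    (factR : rvec G (univ \ {a, b, c}) a + rvec G (univ \ {a, b, c}) b +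
      rvec G (univ \ {a, b, c}) c = 0)
    (hpair : srank G {x, y} ((univ \ {a}) \ {x, y}) ≤ 1)
    (hbig : 2 ≤ srank G {x, y} (univ \ {x, y})) : False := by
  classical
  set Y0 : Finset V := univ \ {a, b, c} with hY0
  set Y : Finset V := (univ \ {a}) \ {x, y} with hYdef
  set W : Finset V := univ \ {x, y} with hWdef
  have hYW : Y ⊆ W := by
    intro u hu
    simp only [hYdef, hWdef, Finset.mem_sdiff, Finset.mem_univ, true_and, Finset.mem_insert,
      Finset.mem_singleton] at hu ⊢
    tauto
  rw [srank_pair] at hpair hbig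
  obtain ⟨cx, cy, hcne, hdep⟩ := pair_dep hpair
  set s : V → ZMod 2 := cx • rvec G W x + cy • rvec G W y with hs
  have htr : truncM Y s = 0 := by
    rw [hs, map_add, map_smul, map_smul, truncM_rvec hYW, truncM_rvec hYW]
    exact hdep
  have hsne : s ≠ 0 := by
    intro h0
    exact hcne (pair_indep hbig cx cy (by rw [← hs]; exact h0))
  -- s vanishes on Y and off W
  have hYzero : ∀ u ∈ Y, s u = 0 := by
    intro u hu
    have := congrFun htr u
    rw [truncM_apply, if_pos hu] at this
    simpa using this
  have hWzero : ∀ u, u ∉ W → s u = 0 := by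
    intro u hu
    have hx0 : rvec G W x u = 0 := by simp [rvec, hu]
    have hy0 : rvec G W y u = 0 := by simp [rvec, hu]
    simp [hs, hx0, hy0]
  -- hence s is supported at a, and s a = 1
  have hsa : s a ≠ 0 := by
    intro h0
    apply hsne
    funext u
    by_cases huW : u ∈ W
    · by_cases huY : u ∈ Y
      · simpa using hYzero u huY
      · have hua : u = a := by
          simp only [hYdef, hWdef, Finset.mem_sdiff, Finset.mem_univ, true_and,
            Finset.mem_insert, Finset.mem_singleton] at huW huY
          tauto
        rw [hua]; simpa using h0
    · simpa using hWzero u huW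
  have hsa1 : s a = 1 := by
    rcases zmod2_cases (s a) with h | h
    · exact absurd h hsa
    · exact h
  -- abbreviations for adjacency indicators
  set exa : ZMod 2 := if G.Adj x a then 1 else 0 with hexa
  set exb : ZMod 2 := if G.Adj x b then 1 else 0 with hexb
  set exc : ZMod 2 := if G.Adj x c then 1 else 0 with hexc
  set eya : ZMod 2 := if G.Adj y a then 1 else 0 with heya
  set eyb : ZMod 2 := if G.Adj y b then 1 else 0 with heyb
  set eyc : ZMod 2 := if G.Adj y c then 1 else 0 with heyc
  have haW : a ∈ W := by simp [hWdef, Ne.symm hxa, Ne.symm hya]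
  have hbW : b ∈ W := by simp [hWdef, Ne.symm hxb, Ne.symm hyb]
  have hcW : c ∈ W := by simp [hWdef, Ne.symm hxc, Ne.symm hyc]
  have hbY : b ∈ Y := by simp [hYdef, Ne.symm hab, Ne.symm hxb, Ne.symm hyb]
  have hcY : c ∈ Y := by simp [hYdef, Ne.symm hac, Ne.symm hxc, Ne.symm hyc]
  have hsv : ∀ v ∈ W, s v = cx * (if G.Adj x v then 1 else 0) +
      cy * (if G.Adj y v then 1 else 0) := by
    intro v hv
    simp [hs, rvec, hv, smul_eq_mul]
  have eq1 : cx * exa + cy * eya = 1 := by rw [hexa, heya, ← hsv a haW]; exact hsa1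
  have eq2 : cx * exb + cy * eyb = 0 := by rw [hexb, heyb, ← hsv b hbW]; exact hYzero b hbY
  have eq3 : cx * exc + cy * eyc = 0 := by rw [hexc, heyc, ← hsv c hcW]; exact hYzero c hcY
  have hxY0 : x ∈ Y0 := by simp [hY0, hxa, hxb, hxc]
  have hyY0 : y ∈ Y0 := by simp [hY0, hya, hyb, hyc]
  have fx : exa + exb + exc = 0 := by
    have := congrFun factR x
    simp only [Pi.add_apply, Pi.zero_apply, rvec, hxY0, true_and] at this
    rw [G.adj_comm a x, G.adj_comm b x, G.adj_comm c x] at this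
    rw [hexa, hexb, hexc]
    simpa using this
  have fy : eya + eyb + eyc = 0 := by
    have := congrFun factR y
    simp only [Pi.add_apply, Pi.zero_apply, rvec, hyY0, true_and] at this
    rw [G.adj_comm a y, G.adj_comm b y, G.adj_comm c y] at this
    rw [heya, heyb, heyc]
    simpa using this
  have h2 : (2 : ZMod 2) = 0 := by decide
  have : (1 : ZMod 2) = 0 := by
    linear_combination eq1 + eq2 + eq3 - cx * fx - cy * fy + h2
  exact absurd this (by decide)
lemma h31_quad {G : SimpleGraph V} (h31 : RankConn G Finset.univ 3 1)
    (hcard : 8 ≤ Fintype.card V) {p q r s : V}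
    (hpq : p ≠ q) (hpr : p ≠ r) (hps : p ≠ s) (hqr : q ≠ r) (hqs : q ≠ s) (hrs : r ≠ s)
    (hrk : srank G {p, q, r, s} (univ \ {p, q, r, s}) ≤ 2) : False := by
  have hc4 : ({p, q, r, s} : Finset V).card = 4 := by
    rw [Finset.card_insert_of_notMem (by simp [hpq, hpr, hps]),
        Finset.card_insert_of_notMem (by simp [hqr, hqs]),
        Finset.card_insert_of_notMem (by simp [hrs]), Finset.card_singleton]
  have hrk' : cutRank G univ {p, q, r, s} ≤ 2 := by
    rw [cutRank, cutRankOn_eq_srank]; exact hrk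
  have hlt := h31 {p, q, r, s} (Finset.subset_univ _)
    (by exact_mod_cast Nat.lt_succ_of_le hrk')
  have hco : (univ \ ({p, q, r, s} : Finset V)).card = Fintype.card V - 4 := by
    rw [Finset.card_sdiff_of_subset (Finset.subset_univ _), Finset.card_univ, hc4]
  rw [hc4, hco, min_lt_iff] at hlt
  omega

lemma del_prime {G : SimpleGraph V} (hp : IsPrime G Finset.univ)
    (h31 : RankConn G Finset.univ 3 1) (hcard : 8 ≤ Fintype.card V)
    {a b c : V} (hab : a ≠ b) (hac : a ≠ c) (hbc : b ≠ c)
    (ht : Triplet G a b c) : IsPrime G (Finset.univ \ {a}) := by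
  classical
  have hba := hab.symm
  have hca := hac.symm
  have hcb := hbc.symm
  set n := Fintype.card V with hn
  -- set identities
  have I1 : ({a, b, c} : Finset V) \ {a} = {b, c} := by
    ext u
    simp only [Finset.mem_sdiff, Finset.mem_insert, Finset.mem_singleton]
    constructor
    · rintro ⟨rfl | h | h, h2⟩
      · exact absurd rfl h2
      · exact Or.inl h
      · exact Or.inr h
    · rintro (rfl | rfl)
      · exact ⟨Or.inr (Or.inl rfl), hba⟩
      · exact ⟨Or.inr (Or.inr rfl), hca⟩
  have I2 : (univ \ {a}) \ ({b, c} : Finset V) = univ \ {a, b, c} := by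
    ext u
    simp only [Finset.mem_sdiff, Finset.mem_univ, true_and, Finset.mem_insert,
      Finset.mem_singleton]
    tauto
  have I3 : ({a, b, c} : Finset V) \ {b} = {a, c} := by
    ext u
    simp only [Finset.mem_sdiff, Finset.mem_insert, Finset.mem_singleton]
    constructor
    · rintro ⟨rfl | rfl | h, h2⟩
      · exact Or.inl rfl
      · exact absurd rfl h2
      · exact Or.inr h
    · rintro (rfl | rfl)
      · exact ⟨Or.inl rfl, hab⟩
      · exact ⟨Or.inr (Or.inr rfl), hcb⟩
  have I4 : (univ \ {b}) \ ({a, c} : Finset V) = univ \ {a, b, c} := by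
    ext u
    simp only [Finset.mem_sdiff, Finset.mem_univ, true_and, Finset.mem_insert,
      Finset.mem_singleton]
    tauto
  have I5 : ({a, b, c} : Finset V) \ {c} = {a, b} := by
    ext u
    simp only [Finset.mem_sdiff, Finset.mem_insert, Finset.mem_singleton]
    constructor
    · rintro ⟨rfl | rfl | rfl, h2⟩
      · exact Or.inl rfl
      · exact Or.inr rfl
      · exact absurd rfl h2
    · rintro (rfl | rfl)
      · exact ⟨Or.inl rfl, hac⟩
      · exact ⟨Or.inr (Or.inl rfl), hbc⟩
  have I6 : (univ \ {c}) \ ({a, b} : Finset V) = univ \ {a, b, c} := by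
    ext u
    simp only [Finset.mem_sdiff, Finset.mem_univ, true_and, Finset.mem_insert,
      Finset.mem_singleton]
    tauto
  -- triplet facts
  have F1 : srank G {a, b, c} (univ \ {a, b, c}) ≤ 2 := by
    have h1 := ht.1
    rw [cutRank, cutRankOn_eq_srank] at h1
    omega
  have F2bc : 2 ≤ srank G {b, c} (univ \ {a, b, c}) := by
    have h1 := ht.2 a (by simp)
    rw [I1, cutRank, cutRankOn_eq_srank, I2] at h1
    omega
  have F2ac : 2 ≤ srank G {a, c} (univ \ {a, b, c}) := by
    have h1 := ht.2 b (by simp)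
    rw [I3, cutRank, cutRankOn_eq_srank, I4] at h1
    omega
  have F2ab : 2 ≤ srank G {a, b} (univ \ {a, b, c}) := by
    have h1 := ht.2 c (by simp)
    rw [I5, cutRank, cutRankOn_eq_srank, I6] at h1
    omega
  have factR : rvec G (univ \ {a, b, c}) a + rvec G (univ \ {a, b, c}) b +
      rvec G (univ \ {a, b, c}) c = 0 :=
    triple_relation F1 F2bc F2ac F2ab
  constructor
  · -- connectivity
    rw [SimpleGraph.connected_iff]
    refine ⟨?_, ⟨⟨b, Finset.mem_coe.2 (by simp [hba])⟩⟩⟩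
    by_contra hpc
    unfold SimpleGraph.Preconnected at hpc
    push_neg at hpc
    obtain ⟨u, v, huv⟩ := hpc
    set A : Finset V := (univ \ {a}).filter
      (fun w => ∃ hw : w ∈ (↑(univ \ ({a} : Finset V)) : Set V),
        (G.induce (↑(univ \ ({a} : Finset V)) : Set V)).Reachable u ⟨w, hw⟩) with hA
    have hAS : A ⊆ univ \ {a} := Finset.filter_subset _ _
    have huA : u.1 ∈ A := by
      refine Finset.mem_filter.2 ⟨Finset.mem_coe.1 u.2, u.2, ?_⟩
      have h : (⟨u.1, u.2⟩ : {x // x ∈ (↑(univ \ ({a} : Finset V)) : Set V)}) = u :=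
        Subtype.ext rfl
      rw [h]
    have hvA : v.1 ∉ A := by
      intro hmem
      obtain ⟨-, hw, hr⟩ := Finset.mem_filter.1 hmem
      apply huv
      have h : (⟨v.1, hw⟩ : {x // x ∈ (↑(univ \ ({a} : Finset V)) : Set V)}) = v :=
        Subtype.ext rfl
      rwa [h] at hr
    have hedge : ∀ p ∈ A, ∀ q ∈ univ \ ({a} : Finset V), q ∉ A → ¬ G.Adj p q := by
      intro p hpA q hqS hqA hadj
      apply hqA
      obtain ⟨hpS, hpw, hr⟩ := Finset.mem_filter.1 hpA
      refine Finset.mem_filter.2 ⟨hqS, Finset.mem_coe.2 hqS, ?_⟩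
      refine hr.trans (SimpleGraph.Adj.reachable ?_)
      show (G.induce (↑(univ \ ({a} : Finset V)) : Set V)).Adj ⟨p, hpw⟩ ⟨q, Finset.mem_coe.2 hqS⟩
      simpa using hadj
    have hScard : (univ \ ({a} : Finset V)).card = n - 1 := by
      rw [Finset.card_sdiff_of_subset (by simp)]; simp [hn]
    have key : ∀ B : Finset V, B ⊆ univ \ {a} → ((univ \ {a}) \ B).Nonempty → 2 ≤ B.card →
        (∀ p ∈ B, ∀ q ∈ univ \ ({a} : Finset V), q ∉ B → ¬G.Adj p q) → False := by
      intro B hBS hBne h2B hBedge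
      apply hp.2 B
      have hBcard : B.card < (univ \ ({a} : Finset V)).card := by
        obtain ⟨w, hw⟩ := hBne
        rw [Finset.mem_sdiff] at hw
        exact Finset.card_lt_card ((Finset.ssubset_iff_of_subset hBS).2 ⟨w, hw.1, hw.2⟩)
      have haB : a ∉ B := by
        intro h
        have := hBS h
        simp at this
      refine ⟨Finset.subset_univ B, ?_, h2B, ?_⟩
      · rw [cutRank, cutRankOn_eq_srank]
        apply srank_le_one_of_single_col G haB
        intro p hpB q hqB hqa hadj
        exact hBedge p hpB q (by simp [hqa]) hqB hadj
      · have h1 : (univ \ B).card = n - B.card := by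
          rw [Finset.card_sdiff_of_subset (Finset.subset_univ B)]; simp [hn]
        omega
    by_cases h2 : 2 ≤ A.card
    · exact key A hAS ⟨v.1, Finset.mem_sdiff.2 ⟨Finset.mem_coe.1 v.2, hvA⟩⟩ h2 hedge
    · refine key ((univ \ {a}) \ A) Finset.sdiff_subset ?_ ?_ ?_
      · have h : (univ \ {a}) \ ((univ \ {a}) \ A) = A := by
          rw [Finset.sdiff_sdiff_self_left, Finset.inter_eq_right.2 hAS]
        rw [h]
        exact ⟨u.1, huA⟩
      · have h1 : ((univ \ {a}) \ A).card = (univ \ ({a} : Finset V)).card - A.card :=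
          Finset.card_sdiff_of_subset hAS
        omega
      · intro p hp q hq hq2 hadj
        rw [Finset.mem_sdiff] at hp
        have hqA : q ∈ A := by
          by_contra hqA
          exact hq2 (Finset.mem_sdiff.2 ⟨hq, hqA⟩)
        exact hedge q hqA p hp.1 hp.2 hadj.symm
  · -- no split
    intro A hsplit
    obtain ⟨hAS, hrk, h2A, h2B⟩ := hsplit
    have haA : a ∉ A := by intro h; have := hAS h; simp at this
    have hrk' : srank G A ((univ \ {a}) \ A) ≤ 1 := by
      rw [cutRank, cutRankOn_eq_srank] at hrk; exact hrk
    have hScard : (univ \ ({a} : Finset V)).card = n - 1 := by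
      rw [Finset.card_sdiff_of_subset (by simp)]; simp [hn]
    -- key2 : small splits are impossible
    have key2 : ∀ B : Finset V, B ⊆ univ \ {a} → srank G B ((univ \ {a}) \ B) ≤ 1 →
        2 ≤ B.card → B.card ≤ 3 → False := by
      intro B hBS hr1 hge2 hle3
      have haB : a ∉ B := by intro h; have := hBS h; simp at this
      by_cases hc3 : B.card = 3
      · have hSB : univ \ (insert a B) = (univ \ {a}) \ B := by
          ext w
          simp only [Finset.mem_sdiff, Finset.mem_univ, true_and, Finset.mem_insert,
            Finset.mem_singleton]
          tauto
        have hq : srank G (insert a B) (univ \ insert a B) ≤ 2 := by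
          rw [hSB]
          exact le_trans (srank_insert_row_le G B ((univ \ {a}) \ B) a) (by omega)
        have hc4 : (insert a B).card = 4 := by
          rw [Finset.card_insert_of_notMem haB]; omega
        have hrk2 : cutRank G univ (insert a B) ≤ 2 := by
          rw [cutRank, cutRankOn_eq_srank]; exact hq
        have hlt := h31 (insert a B) (Finset.subset_univ _)
          (by exact_mod_cast Nat.lt_succ_of_le hrk2)
        have hco : (univ \ insert a B).card = n - 4 := by
          rw [Finset.card_sdiff_of_subset (Finset.subset_univ _), hc4, Finset.card_univ, ← hn]
        rw [hc4, hco, min_lt_iff] at hlt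
        omega
      · -- B.card = 2
        obtain ⟨x, y, hxy, rfl⟩ := Finset.card_eq_two.1 (by omega : B.card = 2)
        have hxa : x ≠ a := by intro h; exact haB (by simp [← h])
        have hya : y ≠ a := by intro h; exact haB (by simp [← h])
        by_cases hxbc : x = b ∨ x = c
        · by_cases hybc : y = b ∨ y = c
          · have hxy2 : ({x, y} : Finset V) = {b, c} := by
              rcases hxbc with rfl | rfl <;> rcases hybc with rfl | rfl
              · exact absurd rfl hxy
              · rfl
              · exact Finset.pair_comm _ _
              · exact absurd rfl hxy
            rw [hxy2, I2] at hr1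
            omega
          · push_neg at hybc
            rcases hxbc with rfl | rfl
            · have hY0eq : (univ \ ({a, x, c} : Finset V)) = univ \ {a, c, x} := by
                ext w
                simp only [Finset.mem_sdiff, Finset.mem_univ, true_and, Finset.mem_insert,
                  Finset.mem_singleton]
                tauto
              have hq := quad_rank_le (G := G) (a := a) (s := c) (t := x) (z := y)
                hY0eq
                (by rw [add_right_comm] at factR; exact factR)
                hr1 hya hybc.2 hybc.1
              exact h31_quad h31 hcard hac hab (Ne.symm hya) hcb (Ne.symm hybc.2)
                (Ne.symm hybc.1) hq
            · have hq := quad_rank_le (G := G) (a := a) (s := b) (t := x) (z := y)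
                rfl factR hr1 hya hybc.1 hybc.2
              exact h31_quad h31 hcard hab hac (Ne.symm hya) hbc (Ne.symm hybc.1)
                (Ne.symm hybc.2) hq
        · push_neg at hxbc
          by_cases hybc : y = b ∨ y = c
          · rw [Finset.pair_comm x y] at hr1
            rcases hybc with rfl | rfl
            · have hY0eq : (univ \ ({a, y, c} : Finset V)) = univ \ {a, c, y} := by
                ext w
                simp only [Finset.mem_sdiff, Finset.mem_univ, true_and, Finset.mem_insert,
                  Finset.mem_singleton]
                tauto
              have hq := quad_rank_le (G := G) (a := a) (s := c) (t := y) (z := x)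
                hY0eq
                (by rw [add_right_comm] at factR; exact factR)
                hr1 hxa hxbc.2 hxbc.1
              exact h31_quad h31 hcard hac hab (Ne.symm hxa) hcb (Ne.symm hxbc.2)
                (Ne.symm hxbc.1) hq
            · have hq := quad_rank_le (G := G) (a := a) (s := b) (t := y) (z := x)
                rfl factR hr1 hxa hxbc.1 hxbc.2
              exact h31_quad h31 hcard hab hac (Ne.symm hxa) hbc (Ne.symm hxbc.1)
                (Ne.symm hxbc.2) hq
          · push_neg at hybc
            have hbig : 2 ≤ srank G {x, y} (univ \ {x, y}) := by
              by_contra hb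
              push_neg at hb
              apply hp.2 {x, y}
              refine ⟨Finset.subset_univ _, ?_, ?_, ?_⟩
              · rw [cutRank, cutRankOn_eq_srank]; omega
              · exact (Finset.card_pair hxy).ge
              · have hc2 : (univ \ ({x, y} : Finset V)).card = n - 2 := by
                  rw [Finset.card_sdiff_of_subset (Finset.subset_univ _), Finset.card_pair hxy,
                    Finset.card_univ, ← hn]
                omega
            exact disjoint_case_false hxa hxbc.1 hxbc.2 hya hybc.1 hybc.2 hxy hab hac hbc
              factR hr1 hbig
    -- size analysis
    have hins : univ \ A = insert a ((univ \ {a}) \ A) := by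
      ext w
      simp only [Finset.mem_sdiff, Finset.mem_univ, true_and, Finset.mem_insert,
        Finset.mem_singleton]
      by_cases hw : w = a
      · subst hw; simp [haA]
      · simp [hw]
    have hnaSA : a ∉ (univ \ {a}) \ A := by simp
    have hGA : cutRank G univ A ≤ 2 := by
      rw [cutRank, cutRankOn_eq_srank, hins]
      exact le_trans (srank_insert_col_le G A _ hnaSA) (by omega)
    have hlt := h31 A (Finset.subset_univ _) (by exact_mod_cast Nat.lt_succ_of_le hGA)
    have hcoA : (univ \ A).card = n - A.card := by
      rw [Finset.card_sdiff_of_subset (Finset.subset_univ _), Finset.card_univ, ← hn]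
    rw [hcoA, min_lt_iff] at hlt
    have hBScard : ((univ \ {a}) \ A).card = n - 1 - A.card := by
      rw [Finset.card_sdiff_of_subset hAS, hScard]
    by_cases hsmall : A.card ≤ 3
    · exact key2 A hAS hrk' h2A hsmall
    · have hSB2 : (univ \ {a}) \ ((univ \ {a}) \ A) = A := by
        rw [Finset.sdiff_sdiff_self_left, Finset.inter_eq_right.2 hAS]
      have hrkB : srank G ((univ \ {a}) \ A) ((univ \ {a}) \ ((univ \ {a}) \ A)) ≤ 1 := by
        rw [hSB2]
        calc srank G ((univ \ {a}) \ A) A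
            = cutRankOn G ((univ \ {a}) \ A) A := (cutRankOn_eq_srank G _ A).symm
          _ = cutRankOn G A ((univ \ {a}) \ A) := cutRankOn_comm G _ A
          _ = srank G A ((univ \ {a}) \ A) := cutRankOn_eq_srank G A _
          _ ≤ 1 := hrk'
      exact key2 ((univ \ {a}) \ A) Finset.sdiff_subset hrkB h2B (by omega)


lemma triplet_congr {G : SimpleGraph V} {a b c a' b' c' : V}
    (h : ({a', b', c'} : Finset V) = {a, b, c}) (ht : Triplet G a b c) :
    Triplet G a' b' c' := by
  unfold Triplet at ht ⊢
  rw [h]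
  exact ht

theorem triplet_del_prime {G : SimpleGraph V} (hp : IsPrime G Finset.univ)
    (h31 : RankConn G Finset.univ 3 1) (hcard : 8 ≤ Fintype.card V)
    {a b c : V} (hab : a ≠ b) (hac : a ≠ c) (hbc : b ≠ c)
    (ht : Triplet G a b c) :
    IsPrime G (Finset.univ \ {a}) ∧ IsPrime G (Finset.univ \ {b}) ∧ IsPrime G (Finset.univ \ {c}) := by
  refine ⟨del_prime hp h31 hcard hab hac hbc ht, ?_, ?_⟩
  · refine del_prime hp h31 hcard hab.symm hbc hac (triplet_congr ?_ ht)
    ext u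
    simp only [Finset.mem_insert, Finset.mem_singleton]
    tauto
  · refine del_prime hp h31 hcard hac.symm hbc.symm hab (triplet_congr ?_ ht)
    ext u
    simp only [Finset.mem_insert, Finset.mem_singleton]
    tauto
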